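/- Let n ∈ ℕ and let X be a Hausdorff, first-countable, locally path-connected topological space. Then the set of π_n-wild points of X is closed in X. -/

import Mathlib

open Filter Topology

/-- The unit `n`-sphere in `ℝ^(n+1)`. -/
abbrev Sph (n : ℕ) : Type :=
  Metric.sphere (0 : EuclideanSpace ℝ (Fin (n + 1))) 1

/-- The basepoint `s₀ = (1,0,…,0)` of the unit `n`-sphere. -/
noncomputable def spherePt (n : ℕ) : Sph n :=
  ⟨EuclideanSpace.single 0 1, by
    simp [mem_sphere_zero_iff_norm, EuclideanSpace.norm_single]⟩

/-- A continuous map `S^n → X` is essential if it is not homotopic to a constant map. -/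
def Essential {n : ℕ} {X : Type*} [TopologicalSpace X] (f : C(Sph n, X)) : Prop :=
  ∀ x : X, ¬ f.Homotopic (ContinuousMap.const (Sph n) x)

/-- `x` is a `π_n`-wild point of `X` if there is a sequence of essential maps
`S^n → X` based at `x` converging to the constant map at `x` in the compact-open
topology. -/
def IsWildPoint (n : ℕ) {X : Type*} [TopologicalSpace X] (x : X) : Prop :=
  ∃ f : ℕ → C(Sph n, X),
    (∀ k, f k (spherePt n) = x) ∧
    (∀ k, Essential (f k)) ∧
    Tendsto f atTop (𝓝 (ContinuousMap.const (Sph n) x))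

/-- The `π_n`-wild set of `X`. -/
def wildSet (n : ℕ) (X : Type*) [TopologicalSpace X] : Set X :=
  {x | IsWildPoint n x}

/-- A continuous map is `π_n`-injective if precomposition reflects inessentiality. -/
def PiNInjective (n : ℕ) {X Y : Type*} [TopologicalSpace X] [TopologicalSpace Y]
    (f : C(X, Y)) : Prop :=
  ∀ g : C(Sph n, X),
    (∃ y : Y, (f.comp g).Homotopic (ContinuousMap.const (Sph n) y)) →
    ∃ x : X, g.Homotopic (ContinuousMap.const (Sph n) x)

/-- `X` is `π_n`-rigid at `x`. -/
def IsRigidAt (n : ℕ) {X : Type*} [TopologicalSpace X] (x : X) : Prop :=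
  ∃ f : ℕ → C(Sph n, X),
    (∀ k, f k (spherePt n) = x) ∧
    (∀ k, Essential (f k)) ∧
    Tendsto f atTop (𝓝 (ContinuousMap.const (Sph n) x)) ∧
    ∀ β : C(unitInterval, X), β 0 = x →
      ∀ H : ℕ → C(Sph n × unitInterval, X),
        (∀ k s, H k (s, 0) = f k s) →
        (∀ k t, H k (spherePt n, t) = β t) →
        Tendsto H atTop (𝓝 (β.comp (ContinuousMap.snd (α := Sph n)))) →
        β 1 = x


open Set

noncomputable section AuxWild

noncomputable def psi (c : ℝ) : ℝ := min ((4*c+1)/3) 1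

noncomputable def lam (c : ℝ) : ℝ := Real.sqrt ((8/9) * max (1 - 2*c) 0 / (1 - c))

lemma continuous_psi : Continuous psi := by
  unfold psi; fun_prop

lemma lam_nonneg (c : ℝ) : 0 ≤ lam c := Real.sqrt_nonneg _

lemma psi_of_ge {c : ℝ} (h : (1:ℝ)/2 ≤ c) : psi c = 1 :=
  min_eq_right (by linarith)

lemma lam_of_ge {c : ℝ} (h : (1:ℝ)/2 ≤ c) : lam c = 0 := by
  have : max (1 - 2*c) 0 = 0 := max_eq_right (by linarith)
  simp [lam, this]

lemma psi_of_le {c : ℝ} (h : c ≤ (1:ℝ)/2) : psi c = (4*c+1)/3 :=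
  min_eq_left (by linarith)

lemma psi_le_one (c : ℝ) : psi c ≤ 1 := min_le_right _ _

lemma neg_one_le_psi {c : ℝ} (h : -1 ≤ c) : -1 ≤ psi c :=
  le_min (by linarith) (by norm_num)

lemma lam_sq {c : ℝ} (h1 : -1 ≤ c) (h2 : c ≤ (1:ℝ)/2) :
    lam c ^ 2 * (1 - c^2) = 1 - psi c ^ 2 := by
  have hc : (0:ℝ) < 1 - c := by linarith
  have hmax : max (1 - 2*c) 0 = 1 - 2*c := max_eq_left (by linarith)
  have harg : (0:ℝ) ≤ (8/9) * max (1 - 2*c) 0 / (1 - c) := by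
    apply div_nonneg _ hc.le
    positivity
  have : lam c ^ 2 = (8/9) * (1 - 2*c) / (1 - c) := by
    rw [lam, Real.sq_sqrt harg, hmax]
  rw [this, psi_of_le h2]
  field_simp
  ring

lemma continuous_lam : Continuous lam := by
  have key : ∀ c : ℝ, c ≠ 1 → ContinuousAt lam c := by
    intro c hc
    apply Real.continuous_sqrt.continuousAt.comp
    apply ContinuousAt.div
    · fun_prop
    · fun_prop
    · intro h; apply hc; linarith [sub_eq_zero.mp h]
  rw [continuous_iff_continuousAt]
  intro c
  by_cases hc : c = 1
  · subst hc
    have : lam =ᶠ[𝓝 (1:ℝ)] fun _ => 0 := by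
      filter_upwards [Ioi_mem_nhds (by norm_num : (1:ℝ)/2 < 1)] with d hd
      exact lam_of_ge (le_of_lt hd)
    exact ContinuousAt.congr (continuousAt_const) this.symm
  · exact key c hc


variable {n : ℕ}

def Qfun (n : ℕ) (s : EuclideanSpace ℝ (Fin (n+1))) : EuclideanSpace ℝ (Fin (n+1)) :=
  EuclideanSpace.single 0 (psi (s 0)) + lam (s 0) • (s - EuclideanSpace.single 0 (s 0))

lemma smul_euclidSingle {m : ℕ} (a b : ℝ) (i : Fin m) :
    a • EuclideanSpace.single i b = EuclideanSpace.single i (a * b) := by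
  ext j
  by_cases h : j = i <;>
    simp [EuclideanSpace.single_apply, h, PiLp.smul_apply]

lemma continuous_Qfun : Continuous (Qfun n) := by
  have h0 : Continuous fun s : EuclideanSpace ℝ (Fin (n+1)) => s 0 :=
    (EuclideanSpace.proj (0 : Fin (n+1))).continuous
  have h1 : ∀ (f : ℝ → ℝ), Continuous f → Continuous fun s : EuclideanSpace ℝ (Fin (n+1)) =>
      EuclideanSpace.single (0 : Fin (n+1)) (f (s 0)) := by
    intro f hf
    have : ∀ s : EuclideanSpace ℝ (Fin (n+1)), EuclideanSpace.single (0 : Fin (n+1)) (f (s 0))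
        = f (s 0) • EuclideanSpace.single (0 : Fin (n+1)) (1:ℝ) := fun s => by
      rw [smul_euclidSingle, mul_one]
    simp_rw [this]
    fun_prop
  unfold Qfun
  exact ((h1 psi continuous_psi).add
    (((continuous_lam.comp h0).smul (continuous_id.sub (h1 id continuous_id)))))

-- coordinate facts
lemma c_mem {s : EuclideanSpace ℝ (Fin (n+1))} (hs : ‖s‖ = 1) :
    -1 ≤ s 0 ∧ s 0 ≤ 1 := by
  have h := abs_real_inner_le_norm s (EuclideanSpace.single (0 : Fin (n+1)) (1:ℝ))
  rw [EuclideanSpace.inner_single_right, EuclideanSpace.norm_single] at h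
  simp [hs] at h
  rw [abs_le] at h
  exact h

lemma inner_single_b (c' : ℝ) (s : EuclideanSpace ℝ (Fin (n+1))) :
    (inner ℝ (EuclideanSpace.single (0 : Fin (n+1)) c') (s - EuclideanSpace.single 0 (s 0)) : ℝ) = 0 := by
  rw [EuclideanSpace.inner_single_left]
  simp [PiLp.sub_apply, EuclideanSpace.single_apply]

lemma norm_b_sq {s : EuclideanSpace ℝ (Fin (n+1))} (hs : ‖s‖ = 1) :
    ‖s - EuclideanSpace.single 0 (s 0)‖ ^ 2 = 1 - (s 0)^2 := by
  rw [norm_sub_sq_real, EuclideanSpace.inner_single_right, EuclideanSpace.norm_single, hs]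
  simp [sq_abs]
  ring

lemma norm_Qfun {s : EuclideanSpace ℝ (Fin (n+1))} (hs : ‖s‖ = 1) : ‖Qfun n s‖ = 1 := by
  set c := s 0 with hc
  have hsq : ‖Qfun n s‖ ^ 2 = psi c ^ 2 + lam c ^ 2 * (1 - c ^ 2) := by
    rw [Qfun, norm_add_sq_real, real_inner_smul_right, inner_single_b, norm_smul, mul_pow,
      EuclideanSpace.norm_single, norm_b_sq hs]
    simp [sq_abs]
    rfl
  have hone : ‖Qfun n s‖ ^ 2 = 1 := by
    rcases le_or_gt c (1/2) with h | h
    · rw [hsq, lam_sq (c_mem hs).1 h]; ring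
    · rw [hsq, psi_of_ge h.le, lam_of_ge h.le]; ring
  nlinarith [norm_nonneg (Qfun n s)]

lemma inner_s_Qfun {s : EuclideanSpace ℝ (Fin (n+1))} (hs : ‖s‖ = 1) :
    (inner ℝ s (Qfun n s) : ℝ) = (s 0) * psi (s 0) + lam (s 0) * (1 - (s 0)^2) := by
  rw [Qfun, inner_add_right, real_inner_smul_right, inner_sub_right,
    EuclideanSpace.inner_single_right, EuclideanSpace.inner_single_right,
    real_inner_self_eq_norm_sq, hs]
  simp
  ring

lemma inner_s_Qfun_ge {s : EuclideanSpace ℝ (Fin (n+1))} (hs : ‖s‖ = 1) :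
    -(1/3 : ℝ) ≤ (inner ℝ s (Qfun n s) : ℝ) := by
  rw [inner_s_Qfun hs]
  obtain ⟨h1, h2⟩ := c_mem hs
  set c := s 0
  rcases le_or_gt c (1/2) with h | h
  · rw [psi_of_le h]
    have hl : 0 ≤ lam c * (1 - c^2) := mul_nonneg (lam_nonneg c) (by nlinarith)
    nlinarith
  · rw [psi_of_ge h.le, lam_of_ge h.le]
    nlinarith

lemma W_norm_sq {s : EuclideanSpace ℝ (Fin (n+1))} (hs : ‖s‖ = 1) {t : ℝ}
    (ht0 : 0 ≤ t) (ht1 : t ≤ 1) :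
    (1/3 : ℝ) ≤ ‖(1 - t) • s + t • Qfun n s‖ ^ 2 := by
  rw [norm_add_sq_real, real_inner_smul_left, real_inner_smul_right, norm_smul, norm_smul,
    mul_pow, mul_pow, hs, norm_Qfun hs]
  have h := inner_s_Qfun_ge hs
  have h1 : ‖(1:ℝ) - t‖ = 1 - t := by rw [Real.norm_eq_abs, abs_of_nonneg (by linarith)]
  have h2 : ‖t‖ = t := by rw [Real.norm_eq_abs, abs_of_nonneg ht0]
  rw [h1, h2]
  nlinarith [mul_le_mul_of_nonneg_left h (mul_nonneg (by linarith : (0:ℝ) ≤ 1 - t) ht0),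
    sq_nonneg (1 - 2*t)]

lemma sph_norm (s : Sph n) : ‖(s : EuclideanSpace ℝ (Fin (n+1)))‖ = 1 :=
  mem_sphere_zero_iff_norm.mp s.2

def QSph (n : ℕ) : C(Sph n, Sph n) :=
  ⟨fun s => ⟨Qfun n s.1, mem_sphere_zero_iff_norm.mpr (norm_Qfun (sph_norm s))⟩,
    (continuous_Qfun.comp continuous_subtype_val).subtype_mk _⟩

lemma QSph_of_ge {s : Sph n} (h : (1:ℝ)/2 ≤ (s : EuclideanSpace ℝ (Fin (n+1))) 0) :
    QSph n s = spherePt n := by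
  apply Subtype.ext
  show Qfun n s.1 = _
  rw [Qfun, psi_of_ge h, lam_of_ge h]
  simp [spherePt]

def Wmap (n : ℕ) (p : unitInterval × Sph n) : EuclideanSpace ℝ (Fin (n+1)) :=
  (1 - (p.1 : ℝ)) • (p.2 : EuclideanSpace ℝ (Fin (n+1))) + (p.1 : ℝ) • Qfun n p.2

lemma Wmap_norm_pos (p : unitInterval × Sph n) : 0 < ‖Wmap n p‖ := by
  have h := W_norm_sq (sph_norm p.2) p.1.2.1 p.1.2.2
  have h2 : (0:ℝ) < ‖Wmap n p‖ ^ 2 := lt_of_lt_of_le (by norm_num) h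
  nlinarith [norm_nonneg (Wmap n p)]

lemma continuous_Wmap : Continuous (Wmap n) := by
  apply Continuous.add
  · exact (continuous_const.sub (continuous_subtype_val.comp continuous_fst)).smul
      (continuous_subtype_val.comp continuous_snd)
  · exact (continuous_subtype_val.comp continuous_fst).smul
      (continuous_Qfun.comp (continuous_subtype_val.comp continuous_snd))

def idHomotopyQ (n : ℕ) : ContinuousMap.Homotopy (ContinuousMap.id (Sph n)) (QSph n) where
  toFun := fun p => ⟨‖Wmap n p‖⁻¹ • Wmap n p, by
    rw [mem_sphere_zero_iff_norm, norm_smul, norm_inv, norm_norm]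
    exact inv_mul_cancel₀ (Wmap_norm_pos p).ne'⟩
  continuous_toFun := by
    apply Continuous.subtype_mk
    exact ((continuous_norm.comp continuous_Wmap).inv₀
      (fun p => (Wmap_norm_pos p).ne')).smul continuous_Wmap
  map_zero_left := by
    intro s
    apply Subtype.ext
    have hW : Wmap n ((0 : unitInterval), s) = (s : EuclideanSpace ℝ (Fin (n+1))) := by
      simp [Wmap]
    show ‖Wmap n ((0 : unitInterval), s)‖⁻¹ • Wmap n ((0 : unitInterval), s)
      = (s : EuclideanSpace ℝ (Fin (n+1)))
    rw [hW, sph_norm s]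
    simp
  map_one_left := by
    intro s
    apply Subtype.ext
    have hW : Wmap n ((1 : unitInterval), s) = Qfun n s.1 := by
      simp [Wmap]
    show ‖Wmap n ((1 : unitInterval), s)‖⁻¹ • Wmap n ((1 : unitInterval), s) = Qfun n s.1
    rw [hW, norm_Qfun (sph_norm s)]
    simp

lemma spherePt_coord0 : ((spherePt n : Sph n) : EuclideanSpace ℝ (Fin (n+1))) 0 = 1 := by
  simp [spherePt, EuclideanSpace.single_apply]

lemma extend_mem {X : Type*} [TopologicalSpace X] {x y : X} (β : Path x y) {V : Set X}
    (hβ : ∀ t, β t ∈ V) (u : ℝ) : β.extend u ∈ V := by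
  have : β.extend u ∈ Set.range β.extend := Set.mem_range_self u
  rw [Path.extend_range] at this
  obtain ⟨t, ht⟩ := this
  rw [← ht]; exact hβ t

section Conj

variable {X : Type*} [TopologicalSpace X]

lemma continuous_coordSph : Continuous fun s : Sph n => (s : EuclideanSpace ℝ (Fin (n+1))) 0 :=
  ((EuclideanSpace.proj (0 : Fin (n+1))).continuous).comp continuous_subtype_val

/-- basepoint-change of a sphere map along a path -/
theorem wild_conj (n : ℕ) (f : C(Sph n, X)) (x : X) (β : Path x (f (spherePt n)))
    (V : Set X) (hf : ∀ s, f s ∈ V) (hβ : ∀ t, β t ∈ V) :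
    ∃ g : C(Sph n, X), g (spherePt n) = x ∧ (∀ s, g s ∈ V) ∧ g.Homotopic f := by
  set c : Sph n → ℝ := fun s => (s : EuclideanSpace ℝ (Fin (n+1))) 0 with hc
  have hcc : Continuous c := continuous_coordSph
  -- the new map
  set gfun : Sph n → X := fun s => if c s ≤ 1/2 then f (QSph n s) else β.extend (2 - 2 * c s)
    with hgfun
  have hfrontier : ∀ s : Sph n, c s = 1/2 → f (QSph n s) = β.extend (2 - 2 * c s) := by
    intro s h
    rw [QSph_of_ge (le_of_eq h.symm), h]
    norm_num
  have hgc : Continuous gfun := by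
    apply Continuous.if_le (f.continuous.comp (QSph n).continuous)
      (β.continuous_extend.comp (by fun_prop)) hcc continuous_const hfrontier
  set g : C(Sph n, X) := ⟨gfun, hgc⟩ with hg
  refine ⟨g, ?_, ?_, ?_⟩
  · show gfun (spherePt n) = x
    rw [hgfun]
    simp only [hc, spherePt_coord0]
    norm_num
  · intro s
    show gfun s ∈ V
    rw [hgfun]
    dsimp only
    split_ifs
    · exact hf _
    · exact extend_mem β hβ _
  · -- homotopic to f
    have h1 : (ContinuousMap.id (Sph n)).Homotopic (QSph n) := ⟨idHomotopyQ n⟩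
    have h2 : f.Homotopic (f.comp (QSph n)) := by
      have := ContinuousMap.Homotopic.comp (ContinuousMap.Homotopic.refl f) h1
      rwa [ContinuousMap.comp_id] at this
    have h3 : (f.comp (QSph n)).Homotopic g := by
      refine ⟨⟨⟨fun p => if c p.2 ≤ 1/2 then f (QSph n p.2)
        else β.extend (1 - (p.1 : ℝ) * (2 * c p.2 - 1)), ?_⟩, ?_, ?_⟩⟩
      · apply Continuous.if_le
        · exact f.continuous.comp ((QSph n).continuous.comp continuous_snd)
        · exact β.continuous_extend.comp (by
            have : Continuous fun p : unitInterval × Sph n => (p.1 : ℝ) :=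
              continuous_subtype_val.comp continuous_fst
            have hc2 : Continuous fun p : unitInterval × Sph n => c p.2 :=
              hcc.comp continuous_snd
            fun_prop)
        · exact hcc.comp continuous_snd
        · exact continuous_const
        · intro p h
          rw [QSph_of_ge (le_of_eq h.symm), h]
          norm_num
      · intro s
        dsimp only
        split_ifs with h
        · rfl
        · push_neg at h
          have heq : (f.comp (QSph n)) s = f (spherePt n) := by
            show f (QSph n s) = _
            rw [QSph_of_ge h.le]
          rw [heq]
          simp
      · intro s
        show (if c s ≤ 1/2 then f (QSph n s) else β.extend (1 - 1 * (2 * c s - 1))) = gfun s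
        rw [hgfun]
        dsimp only
        split_ifs with h
        · rfl
        · ring_nf
    exact (h2.trans h3).symm

end Conj

end AuxWild

/-- in a Hausdorff, first-countable, locally path-connected space,
the `π_n`-wild set is closed. -/
theorem stmt5 {X : Type*} [TopologicalSpace X] [T2Space X]
    [FirstCountableTopology X] [LocallyPathConnectedSpace X] (n : ℕ) :
    IsClosed (wildSet n X) := by
  apply isClosed_of_closure_subset
  intro x hx
  obtain ⟨U, hU⟩ := (𝓝 x).exists_antitone_basis
  have claim : ∀ k : ℕ, ∃ g : C(Sph n, X),
      g (spherePt n) = x ∧ Essential g ∧ ∀ s, g s ∈ U k := by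
    intro k
    have hUk : U k ∈ 𝓝 x := hU.1.mem_of_mem trivial
    obtain ⟨O, hOsub, hOopen, hxO⟩ := mem_nhds_iff.mp hUk
    set V := pathComponentIn O x with hV
    have hVopen : IsOpen V := hOopen.pathComponentIn x
    have hVpc : IsPathConnected V := isPathConnected_pathComponentIn hxO
    have hxV : x ∈ V := mem_pathComponentIn_self hxO
    have hVsub : V ⊆ U k := pathComponentIn_subset.trans hOsub
    obtain ⟨y, hyV, hyw⟩ := mem_closure_iff_nhds.mp hx V (hVopen.mem_nhds hxV)
    obtain ⟨h, hbase, hess, htend⟩ := hyw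
    have hmaps : ∀ᶠ j in atTop, MapsTo (h j) univ V := by
      have := ContinuousMap.tendsto_nhds_compactOpen.mp htend univ isCompact_univ V hVopen
        (fun a _ => hyV)
      exact this
    obtain ⟨j, hj⟩ := hmaps.exists
    obtain ⟨γ, hγ⟩ := hVpc.joinedIn x hxV y hyV
    have hbj : y = h j (spherePt n) := (hbase j).symm
    obtain ⟨g, hg1, hg2, hg3⟩ := wild_conj n (h j) x (γ.cast rfl hbj.symm) V
      (fun s => hj (mem_univ s)) (fun t => by simpa using hγ t)
    refine ⟨g, hg1, ?_, fun s => hVsub (hg2 s)⟩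
    intro z hz
    exact hess j z (hg3.symm.trans hz)
  choose g hg1 hg2 hg3 using claim
  refine ⟨g, hg1, hg2, ?_⟩
  rw [ContinuousMap.tendsto_nhds_compactOpen]
  intro K hK Uo hUo hmapsTo
  rcases K.eq_empty_or_nonempty with hKe | ⟨a, ha⟩
  · filter_upwards with k
    rw [hKe]
    exact mapsTo_empty _ _
  · have hxU : x ∈ Uo := hmapsTo ha
    obtain ⟨k₀, -, hk₀⟩ := hU.1.mem_iff.mp (hUo.mem_nhds hxU)
    filter_upwards [eventually_ge_atTop k₀] with k hk
    intro s _
    exact hk₀ (hU.2 hk (hg3 k s))
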